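/- Let α be a composition of n and let w ∈ 𝔖_n. If there exists j ∈ D(w) with j ∉ D(α), then π̄_w(x_{D(α)}) = 0 in ℤ[x_1,…,x_n] (hence over any coefficient ring). (Key vanishing claim in the proof of Theorem 4.4.) -/

import Mathlib

open MvPolynomial

/-- Value of a permutation of `Fin n` as a function `ℕ → ℕ` (0 outside range). -/
def pval {n : ℕ} (w : Equiv.Perm (Fin n)) (i : ℕ) : ℕ :=
  if h : i < n then (w ⟨i, h⟩ : ℕ) else 0

/-- 0-based descent set of `w`: `i ∈ permDes w` iff `w(i) > w(i+1)`, `0 ≤ i ≤ n-2`.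
(This corresponds to the 1-based descent `i+1` of the paper.) -/
def permDes {n : ℕ} (w : Equiv.Perm (Fin n)) : Finset ℕ :=
  (Finset.range (n - 1)).filter fun i => pval w (i + 1) < pval w i

/-- Number of inversions = Coxeter length of `w`. -/
def invNum {n : ℕ} (w : Equiv.Perm (Fin n)) : ℕ :=
  (Finset.univ.filter fun p : Fin n × Fin n => p.1 < p.2 ∧ w p.2 < w p.1).card

/-- The simple transposition `s_i = (i, i+1)` (0-based); identity if out of range. -/
def sw (n : ℕ) (i : ℕ) : Equiv.Perm (Fin n) :=
  if h : i + 1 < n then Equiv.swap ⟨i, Nat.lt_of_succ_lt h⟩ ⟨i + 1, h⟩ else 1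

/-- Exponent vector of `x_I = ∏_{i ∈ I} (x_0 x_1 ⋯ x_i)`. -/
def expI (n : ℕ) (I : Finset ℕ) : Fin n → ℕ := fun j => (I.filter fun i => (j : ℕ) ≤ i).card

/-- The monomial `x_I = ∏_{i ∈ I} (x_0 x_1 ⋯ x_i)`. -/
noncomputable def xI (R : Type*) [CommRing R] (n : ℕ) (I : Finset ℕ) :
    MvPolynomial (Fin n) R :=
  ∏ j : Fin n, (X j) ^ expI n I j

/-- `λ(d)`: the decreasing rearrangement of an exponent vector. -/
def lam {n : ℕ} (d : Fin n → ℕ) : List ℕ := (List.ofFn d).insertionSort (· ≥ ·)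

/-- `x^d ≺ x^e` : `λ(d)` lexicographically smaller than `λ(e)`. -/
def monLT {n : ℕ} (d e : Fin n → ℕ) : Prop := List.Lex (· < ·) (lam d) (lam e)

/-- 0-based descent set `D(α)` of a composition `α` of `n`:
`{α_1 + ⋯ + α_j - 1 : 1 ≤ j ≤ ℓ(α) - 1}` (0-based shift of the paper's `D(α)`). -/
def compDes {n : ℕ} (c : Composition n) : Finset ℕ :=
  (Finset.range (c.length - 1)).image fun j => c.sizeUpTo (j + 1) - 1

section A
variable {n : ℕ}

theorem Equiv.Perm.apply_inv_self {α : Type*} (f : Equiv.Perm α) (x : α) : f (f⁻¹ x) = x :=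
  Equiv.apply_symm_apply f x

theorem Equiv.Perm.inv_apply_self {α : Type*} (f : Equiv.Perm α) (x : α) : f⁻¹ (f x) = x :=
  Equiv.symm_apply_apply f x

lemma sw_def (i : ℕ) (hi : i + 1 < n) :
    sw n i = Equiv.swap ⟨i, Nat.lt_of_succ_lt hi⟩ ⟨i + 1, hi⟩ := by
  simp [sw, hi]

lemma sw_mul_self (i : ℕ) : sw n i * sw n i = 1 := by
  unfold sw; split
  · exact Equiv.swap_mul_self _ _
  · simp

lemma sw_inv (i : ℕ) : (sw n i)⁻¹ = sw n i := by
  rw [eq_comm, eq_inv_iff_mul_eq_one, sw_mul_self]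

lemma coe_sw (i : ℕ) (hi : i + 1 < n) (c : Fin n) :
    ((sw n i c : Fin n) : ℕ) = if (c : ℕ) = i then i + 1 else if (c : ℕ) = i + 1 then i else c := by
  rw [sw_def i hi, Equiv.swap_apply_def]
  split_ifs with h1 h2 h3 h24 h5 h6 <;> simp_all [Fin.ext_iff]

lemma sw_apply_left (i : ℕ) (hi : i + 1 < n) :
    sw n i ⟨i, Nat.lt_of_succ_lt hi⟩ = ⟨i + 1, hi⟩ := by
  rw [sw_def i hi]; exact Equiv.swap_apply_left _ _

lemma sw_apply_right (i : ℕ) (hi : i + 1 < n) :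
    sw n i ⟨i + 1, hi⟩ = ⟨i, Nat.lt_of_succ_lt hi⟩ := by
  rw [sw_def i hi]; exact Equiv.swap_apply_right _ _

lemma sw_apply_other (i : ℕ) (c : Fin n) (hc1 : (c : ℕ) ≠ i) (hc2 : (c : ℕ) ≠ i + 1) :
    sw n i c = c := by
  unfold sw; split
  · apply Equiv.swap_apply_of_ne_of_ne <;> simp [Fin.ext_iff, hc1, hc2]
  · rfl

lemma sw_lt_iff (i : ℕ) (hi : i + 1 < n) {c d : Fin n}
    (h1 : ¬((c : ℕ) = i ∧ (d : ℕ) = i + 1)) (h2 : ¬((d : ℕ) = i ∧ (c : ℕ) = i + 1)) :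
    sw n i c < sw n i d ↔ c < d := by
  have hc := c.isLt; have hd := d.isLt
  rw [Fin.lt_def, Fin.lt_def, coe_sw i hi, coe_sw i hi]
  split_ifs <;> omega

end A

section B
variable {n : ℕ}

lemma invNum_succ_left (i : ℕ) (hi : i + 1 < n) (w : Equiv.Perm (Fin n))
    (ha : w⁻¹ ⟨i, Nat.lt_of_succ_lt hi⟩ < w⁻¹ ⟨i + 1, hi⟩) :
    invNum (sw n i * w) = invNum w + 1 := by
  set a : Fin n := ⟨i, Nat.lt_of_succ_lt hi⟩ with hav
  set b : Fin n := ⟨i + 1, hi⟩ with hbv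
  have hab : a < b := by simp [hav, hbv, Fin.lt_def]
  have key : (Finset.univ.filter fun p : Fin n × Fin n =>
        p.1 < p.2 ∧ (sw n i * w) p.2 < (sw n i * w) p.1)
      = insert (w⁻¹ a, w⁻¹ b)
        (Finset.univ.filter fun p : Fin n × Fin n => p.1 < p.2 ∧ w p.2 < w p.1) := by
    ext ⟨p, q⟩
    simp only [Finset.mem_filter, Finset.mem_insert, Finset.mem_univ, true_and,
      Prod.mk.injEq]
    simp only [Equiv.Perm.mul_apply]
    constructor
    · rintro ⟨hpq, hlt⟩
      by_cases hP : p = w⁻¹ a ∧ q = w⁻¹ b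
      · exact Or.inl hP
      · right
        refine ⟨hpq, ?_⟩
        have h1 : ¬((w q : ℕ) = i ∧ (w p : ℕ) = i + 1) := by
          rintro ⟨h1, h2⟩
          have hq' : q = w⁻¹ a := by rw [Equiv.Perm.eq_inv_iff_eq]; exact Fin.ext h1
          have hp' : p = w⁻¹ b := by rw [Equiv.Perm.eq_inv_iff_eq]; exact Fin.ext h2
          rw [hq', hp'] at hpq
          exact absurd (hpq.trans ha) (lt_irrefl _)
        have h2 : ¬((w p : ℕ) = i ∧ (w q : ℕ) = i + 1) := by
          rintro ⟨h1, h2⟩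
          exact hP ⟨by rw [Equiv.Perm.eq_inv_iff_eq]; exact Fin.ext h1,
            by rw [Equiv.Perm.eq_inv_iff_eq]; exact Fin.ext h2⟩
        exact (sw_lt_iff i hi (c := w q) (d := w p) h1 h2).mp hlt
    · rintro (⟨hp, hq⟩ | ⟨hpq, hlt⟩)
      · subst hp; subst hq
        refine ⟨ha, ?_⟩
        rw [Equiv.Perm.apply_inv_self, Equiv.Perm.apply_inv_self, hav, hbv,
          sw_apply_left i hi, sw_apply_right i hi]
        exact hab
      · refine ⟨hpq, ?_⟩
        have h1 : ¬((w q : ℕ) = i ∧ (w p : ℕ) = i + 1) := by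
          rintro ⟨h1, h2⟩
          have hq' : q = w⁻¹ a := by rw [Equiv.Perm.eq_inv_iff_eq]; exact Fin.ext h1
          have hp' : p = w⁻¹ b := by rw [Equiv.Perm.eq_inv_iff_eq]; exact Fin.ext h2
          rw [hq', hp'] at hpq
          exact absurd (hpq.trans ha) (lt_irrefl _)
        have h2 : ¬((w p : ℕ) = i ∧ (w q : ℕ) = i + 1) := by
          rintro ⟨h1, h2⟩
          have h1' : w p = a := Fin.ext h1
          have h2' : w q = b := Fin.ext h2
          rw [h1', h2'] at hlt
          exact absurd (hab.trans hlt) (lt_irrefl _)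
        exact (sw_lt_iff i hi (c := w q) (d := w p) h1 h2).mpr hlt
  have hnm : (w⁻¹ a, w⁻¹ b) ∉
      (Finset.univ.filter fun p : Fin n × Fin n => p.1 < p.2 ∧ w p.2 < w p.1) := by
    simp only [Finset.mem_filter, Finset.mem_univ, true_and, not_and,
      Equiv.Perm.apply_inv_self]
    intro _
    exact not_lt.2 hab.le
  unfold invNum
  rw [key, Finset.card_insert_of_notMem hnm]

lemma invNum_pred_left (i : ℕ) (hi : i + 1 < n) (w : Equiv.Perm (Fin n))
    (hd : w⁻¹ ⟨i + 1, hi⟩ < w⁻¹ ⟨i, Nat.lt_of_succ_lt hi⟩) :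
    invNum w = invNum (sw n i * w) + 1 := by
  have h2 := invNum_succ_left i hi (sw n i * w) ?_
  · rwa [← mul_assoc, sw_mul_self, one_mul] at h2
  · rw [mul_inv_rev, sw_inv]
    simp only [Equiv.Perm.mul_apply]
    rwa [sw_apply_left i hi, sw_apply_right i hi]

lemma invNum_inv (w : Equiv.Perm (Fin n)) : invNum w⁻¹ = invNum w := by
  apply Finset.card_nbij' (i := fun p : Fin n × Fin n => (w⁻¹ p.2, w⁻¹ p.1))
    (j := fun p : Fin n × Fin n => (w p.2, w p.1))
  · rintro ⟨p, q⟩ h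
    simp only [Finset.mem_coe, Finset.mem_filter, Finset.mem_univ, true_and] at h ⊢
    simp only [Equiv.Perm.apply_inv_self]
    exact ⟨h.2, h.1⟩
  · rintro ⟨p, q⟩ h
    simp only [Finset.mem_coe, Finset.mem_filter, Finset.mem_univ, true_and] at h ⊢
    simp only [Equiv.Perm.inv_apply_self]
    exact ⟨h.2, h.1⟩
  · rintro ⟨p, q⟩ _; simp
  · rintro ⟨p, q⟩ _; simp

lemma invNum_succ_right (i : ℕ) (hi : i + 1 < n) (w : Equiv.Perm (Fin n))
    (ha : w ⟨i, Nat.lt_of_succ_lt hi⟩ < w ⟨i + 1, hi⟩) :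
    invNum (w * sw n i) = invNum w + 1 := by
  rw [← invNum_inv (w * sw n i), mul_inv_rev, sw_inv, ← invNum_inv w]
  exact invNum_succ_left i hi w⁻¹ (by simpa using ha)

lemma invNum_pred_right (i : ℕ) (hi : i + 1 < n) (w : Equiv.Perm (Fin n))
    (hd : w ⟨i + 1, hi⟩ < w ⟨i, Nat.lt_of_succ_lt hi⟩) :
    invNum w = invNum (w * sw n i) + 1 := by
  rw [← invNum_inv (w * sw n i), mul_inv_rev, sw_inv, ← invNum_inv w]
  exact invNum_pred_left i hi w⁻¹ (by simpa using hd)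

lemma strictMono_perm_eq_one (w : Equiv.Perm (Fin n)) (h : StrictMono w) : w = 1 := by
  have hs : Function.Surjective w := w.surjective
  have h1 : ∀ p, w p = p := by
    intro p
    have h2 := congrFun (StrictMono.coe_orderIsoOfSurjective w h hs) p
    rw [Subsingleton.elim (StrictMono.orderIsoOfSurjective (⇑w) h hs)
      (OrderIso.refl (Fin n))] at h2
    simpa using h2.symm
  ext p
  simp [h1 p]

lemma invNum_eq_zero (w : Equiv.Perm (Fin n)) (h : invNum w = 0) : w = 1 := by
  apply strictMono_perm_eq_one
  intro p q hpq
  have hmem : (p, q) ∉ (Finset.univ.filter fun p : Fin n × Fin n =>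
      p.1 < p.2 ∧ w p.2 < w p.1) := by
    rw [invNum, Finset.card_eq_zero] at h; rw [h]; exact Finset.notMem_empty _
  simp only [Finset.mem_filter, Finset.mem_univ, true_and, not_and] at hmem
  have hne : w p ≠ w q := fun hc => absurd (w.injective hc) hpq.ne
  rcases lt_or_gt_of_ne hne with h' | h'
  · exact h'
  · exact absurd h' (hmem hpq)

lemma exists_descent (w : Equiv.Perm (Fin n)) (hw : w ≠ 1) :
    ∃ i : ℕ, ∃ hi : i + 1 < n, w ⟨i + 1, hi⟩ < w ⟨i, Nat.lt_of_succ_lt hi⟩ := by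
  by_contra hno
  push_neg at hno
  apply hw
  match n, w, hno with
  | 0, w, hno => ext p; exact absurd p.isLt (Nat.not_lt_zero _)
  | (m+1), w, hno =>
    apply strictMono_perm_eq_one
    rw [Fin.strictMono_iff_lt_succ]
    intro i
    have hi : (i : ℕ) + 1 < m + 1 := by omega
    have h1 := hno i hi
    have hcast : Fin.castSucc i = ⟨(i : ℕ), Nat.lt_of_succ_lt hi⟩ := by
      simp [Fin.ext_iff]
    have hsucc : i.succ = ⟨(i : ℕ) + 1, hi⟩ := by simp [Fin.ext_iff]
    rw [hcast, hsucc]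
    refine lt_of_le_of_ne h1 (fun h' => ?_)
    have := w.injective h'
    simp [Fin.ext_iff] at this
end B

section Alg
variable {n : ℕ} (dem : ℕ → MvPolynomial (Fin n) ℤ → MvPolynomial (Fin n) ℤ)
  (hdem : ∀ (i : ℕ) (hi : i + 1 < n) (f : MvPolynomial (Fin n) ℤ),
      (X (⟨i, Nat.lt_of_succ_lt hi⟩ : Fin n) - X ⟨i + 1, hi⟩) * dem i f
        = X (⟨i, Nat.lt_of_succ_lt hi⟩ : Fin n) * f - X ⟨i + 1, hi⟩ * rename (sw n i) f)

lemma X_sub_ne {a b : Fin n} (h : (a : ℕ) ≠ (b : ℕ)) :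
    (X a - X b : MvPolynomial (Fin n) ℤ) ≠ 0 := by
  intro hc
  exact h (congrArg Fin.val (MvPolynomial.X_injective (sub_eq_zero.mp hc)))

lemma rename_sw_invol (i : ℕ) (g : MvPolynomial (Fin n) ℤ) :
    rename (sw n i) (rename (sw n i) g) = g := by
  rw [rename_rename]
  have hc : (sw n i : Fin n → Fin n) ∘ (sw n i : Fin n → Fin n) = id := by
    funext p
    have := Equiv.ext_iff.mp (sw_mul_self (n := n) i) p
    simpa using this
  rw [hc, rename_id, AlgHom.id_apply]

include hdem in
lemma pb_eq (i : ℕ) (hi : i + 1 < n) (f : MvPolynomial (Fin n) ℤ) :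
    (X (⟨i, Nat.lt_of_succ_lt hi⟩ : Fin n) - X ⟨i + 1, hi⟩) * (dem i f - f)
      = X (⟨i + 1, hi⟩ : Fin n) * (f - rename (sw n i) f) := by
  linear_combination hdem i hi f

include hdem in
lemma dem_zero (i : ℕ) (hi : i + 1 < n) : dem i 0 = 0 := by
  have h := hdem i hi 0
  simp only [map_zero, mul_zero, sub_zero, zero_sub, sub_self] at h
  -- h : (X a - X b) * dem i 0 = 0  (hopefully)
  rcases mul_eq_zero.mp h with h' | h'
  · exact absurd h' (X_sub_ne (by simp))
  · exact h'

include hdem in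
lemma pb_invariant (i : ℕ) (hi : i + 1 < n) (f : MvPolynomial (Fin n) ℤ)
    (hf : rename (sw n i) f = f) : dem i f - f = 0 := by
  have h := pb_eq dem hdem i hi f
  rw [hf, sub_self, mul_zero] at h
  rcases mul_eq_zero.mp h with h' | h'
  · exact absurd h' (X_sub_ne (by simp))
  · exact h'

lemma sw_commute {i i' : ℕ} (hd : i + 1 < i' ∨ i' + 1 < i) :
    sw n i * sw n i' = sw n i' * sw n i := by
  by_cases hi : i + 1 < n
  · by_cases hi' : i' + 1 < n
    · ext p
      simp only [Equiv.Perm.mul_apply]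
      simp only [coe_sw i hi, coe_sw i' hi']
      split_ifs <;> omega
    · simp [sw, hi']
  · simp [sw, hi]

lemma sw_braid (i : ℕ) (hi2 : i + 2 < n) :
    sw n i * sw n (i + 1) * sw n i = sw n (i + 1) * sw n i * sw n (i + 1) := by
  have hi1 : i + 1 < n := by omega
  have hi2' : (i + 1) + 1 < n := by omega
  set A : Fin n := ⟨i, by omega⟩
  set B : Fin n := ⟨i + 1, by omega⟩
  set C : Fin n := ⟨i + 2, by omega⟩
  have hAB : A ≠ B := by simp [A, B, Fin.ext_iff]
  have hBC : B ≠ C := by simp [B, C, Fin.ext_iff]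
  have hAC : A ≠ C := by simp [A, C, Fin.ext_iff]
  have e1 : sw n i = Equiv.swap A B := by
    rw [sw_def i hi1]
  have e2 : sw n (i + 1) = Equiv.swap B C := by
    rw [sw_def (i + 1) hi2']
  rw [e1, e2]
  rw [Equiv.swap_comm A B, Equiv.swap_comm B C]
  rw [Equiv.swap_mul_swap_mul_swap hBC.symm (Ne.symm hAC)]
  rw [show Equiv.swap C B = Equiv.swap B C from Equiv.swap_comm C B,
    show Equiv.swap B A = Equiv.swap A B from Equiv.swap_comm B A]
  rw [Equiv.swap_mul_swap_mul_swap hAB hAC]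
  exact Equiv.swap_comm A C

end Alg

section Alg2
variable {n : ℕ} (dem : ℕ → MvPolynomial (Fin n) ℤ → MvPolynomial (Fin n) ℤ)
  (hdem : ∀ (i : ℕ) (hi : i + 1 < n) (f : MvPolynomial (Fin n) ℤ),
      (X (⟨i, Nat.lt_of_succ_lt hi⟩ : Fin n) - X ⟨i + 1, hi⟩) * dem i f
        = X (⟨i, Nat.lt_of_succ_lt hi⟩ : Fin n) * f - X ⟨i + 1, hi⟩ * rename (sw n i) f)

lemma rename_sw_comm {i i' : ℕ} (hd : i + 1 < i' ∨ i' + 1 < i)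
    (g : MvPolynomial (Fin n) ℤ) :
    rename (sw n i) (rename (sw n i') g) = rename (sw n i') (rename (sw n i) g) := by
  rw [rename_rename, rename_rename]
  have h2 : (sw n i : Fin n → Fin n) ∘ (sw n i' : Fin n → Fin n)
      = (sw n i' : Fin n → Fin n) ∘ (sw n i : Fin n → Fin n) := by
    rw [← Equiv.Perm.coe_mul, ← Equiv.Perm.coe_mul, sw_commute hd]
  rw [h2]

lemma rename_sw_braid (i : ℕ) (hi2 : i + 2 < n) (g : MvPolynomial (Fin n) ℤ) :
    rename (sw n i) (rename (sw n (i + 1)) (rename (sw n i) g))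
      = rename (sw n (i + 1)) (rename (sw n i) (rename (sw n (i + 1)) g)) := by
  rw [rename_rename, rename_rename, rename_rename, rename_rename]
  have h2 : ((sw n i : Fin n → Fin n) ∘ (sw n (i + 1) : Fin n → Fin n))
        ∘ (sw n i : Fin n → Fin n)
      = ((sw n (i + 1) : Fin n → Fin n) ∘ (sw n i : Fin n → Fin n))
        ∘ (sw n (i + 1) : Fin n → Fin n) := by
    simp only [← Equiv.Perm.coe_mul]
    rw [sw_braid i hi2]
  rw [h2]

include hdem in
lemma pb_comm (i i' : ℕ) (hi : i + 1 < n) (hi' : i' + 1 < n)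
    (hd : i + 1 < i' ∨ i' + 1 < i) (f : MvPolynomial (Fin n) ℤ) :
    dem i (dem i' f - f) - (dem i' f - f) = dem i' (dem i f - f) - (dem i f - f) := by
  have hne : (X (⟨i, Nat.lt_of_succ_lt hi⟩ : Fin n) - X ⟨i + 1, hi⟩
      : MvPolynomial (Fin n) ℤ) ≠ 0 := X_sub_ne (by simp)
  have hne' : (X (⟨i', Nat.lt_of_succ_lt hi'⟩ : Fin n) - X ⟨i' + 1, hi'⟩
      : MvPolynomial (Fin n) ℤ) ≠ 0 := X_sub_ne (by simp)
  have hii : i ≠ i' := by omega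
  have hs1 : sw n i ⟨i', Nat.lt_of_succ_lt hi'⟩ = ⟨i', Nat.lt_of_succ_lt hi'⟩ :=
    sw_apply_other i _ (by simp; omega) (by simp; omega)
  have hs2 : sw n i ⟨i' + 1, hi'⟩ = ⟨i' + 1, hi'⟩ :=
    sw_apply_other i _ (by simp; omega) (by simp; omega)
  have hs3 : sw n i' ⟨i, Nat.lt_of_succ_lt hi⟩ = ⟨i, Nat.lt_of_succ_lt hi⟩ :=
    sw_apply_other i' _ (by simp; omega) (by simp; omega)
  have hs4 : sw n i' ⟨i + 1, hi⟩ = ⟨i + 1, hi⟩ :=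
    sw_apply_other i' _ (by simp; omega) (by simp; omega)
  have h1 := pb_eq dem hdem i' hi' f
  have h1r := congrArg (rename (sw n i)) h1
  simp only [map_mul, map_sub, rename_X, hs1, hs2] at h1r
  have h2 := pb_eq dem hdem i hi (dem i' f - f)
  simp only [map_sub] at h2
  have k1 := pb_eq dem hdem i hi f
  have k1r := congrArg (rename (sw n i')) k1
  simp only [map_mul, map_sub, rename_X, hs3, hs4] at k1r
  have k2 := pb_eq dem hdem i' hi' (dem i f - f)
  simp only [map_sub] at k2
  have hcm := rename_sw_comm (n := n) hd f
  refine mul_left_cancel₀ (mul_ne_zero hne hne') ?_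
  linear_combination (X (⟨i', Nat.lt_of_succ_lt hi'⟩ : Fin n) - X ⟨i' + 1, hi'⟩) * h2
    + X (⟨i + 1, hi⟩ : Fin n) * h1 - X (⟨i + 1, hi⟩ : Fin n) * h1r
    - (X (⟨i, Nat.lt_of_succ_lt hi⟩ : Fin n) - X ⟨i + 1, hi⟩) * k2
    - X (⟨i' + 1, hi'⟩ : Fin n) * k1 + X (⟨i' + 1, hi'⟩ : Fin n) * k1r
    + X (⟨i + 1, hi⟩ : Fin n) * X (⟨i' + 1, hi'⟩ : Fin n) * hcm

end Alg2

section Alg3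
variable {n : ℕ} (dem : ℕ → MvPolynomial (Fin n) ℤ → MvPolynomial (Fin n) ℤ)
  (hdem : ∀ (i : ℕ) (hi : i + 1 < n) (f : MvPolynomial (Fin n) ℤ),
      (X (⟨i, Nat.lt_of_succ_lt hi⟩ : Fin n) - X ⟨i + 1, hi⟩) * dem i f
        = X (⟨i, Nat.lt_of_succ_lt hi⟩ : Fin n) * f - X ⟨i + 1, hi⟩ * rename (sw n i) f)

lemma sw_apply_mk_other (i v : ℕ) (hv : v < n) (h1 : v ≠ i) (h2 : v ≠ i + 1) :
    sw n i ⟨v, hv⟩ = ⟨v, hv⟩ :=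
  sw_apply_other i _ h1 h2

include hdem in
lemma pb_braid (i : ℕ) (hi2' : (i + 1) + 1 < n) (f : MvPolynomial (Fin n) ℤ) :
    dem i (dem (i+1) (dem i f - f) - (dem i f - f))
        - (dem (i+1) (dem i f - f) - (dem i f - f))
      = dem (i+1) (dem i (dem (i+1) f - f) - (dem (i+1) f - f))
        - (dem i (dem (i+1) f - f) - (dem (i+1) f - f)) := by
  have hi1 : i + 1 < n := by omega
  have hi2 : i + 2 < n := by omega
  have hu : (X (⟨i, Nat.lt_of_succ_lt hi1⟩ : Fin n) - X ⟨i + 1, hi1⟩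
      : MvPolynomial (Fin n) ℤ) ≠ 0 := X_sub_ne (by simp)
  have hv : (X (⟨i + 1, Nat.lt_of_succ_lt hi2'⟩ : Fin n) - X ⟨i + 1 + 1, hi2'⟩
      : MvPolynomial (Fin n) ℤ) ≠ 0 := X_sub_ne (by simp)
  have hw : (X (⟨i, Nat.lt_of_succ_lt hi1⟩ : Fin n) - X ⟨i + 1 + 1, hi2'⟩
      : MvPolynomial (Fin n) ℤ) ≠ 0 := X_sub_ne (by simp; omega)
  have hsA : sw n i ⟨i, Nat.lt_of_succ_lt hi1⟩ = ⟨i + 1, hi1⟩ := sw_apply_left i hi1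
  have hsB : sw n i ⟨i + 1, hi1⟩ = ⟨i, Nat.lt_of_succ_lt hi1⟩ := sw_apply_right i hi1
  have hsA' : sw n i ⟨i + 1, Nat.lt_of_succ_lt hi2'⟩ = ⟨i, Nat.lt_of_succ_lt hi1⟩ := by
    rw [show (⟨i + 1, Nat.lt_of_succ_lt hi2'⟩ : Fin n) = ⟨i + 1, hi1⟩ from rfl]
    exact sw_apply_right i hi1
  have hsC : sw n i ⟨i + 1 + 1, hi2'⟩ = ⟨i + 1 + 1, hi2'⟩ :=
    sw_apply_mk_other i (i + 1 + 1) (by omega) (by omega) (by omega)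
  have htA : sw n (i + 1) ⟨i, Nat.lt_of_succ_lt hi1⟩ = ⟨i, Nat.lt_of_succ_lt hi1⟩ :=
    sw_apply_mk_other (i + 1) i (by omega) (by omega) (by omega)
  have htB : sw n (i + 1) ⟨i + 1, Nat.lt_of_succ_lt hi2'⟩ = ⟨i + 1 + 1, hi2'⟩ :=
    sw_apply_left (i + 1) hi2'
  have htB' : sw n (i + 1) ⟨i + 1, hi1⟩ = ⟨i + 1 + 1, hi2'⟩ := by
    rw [show (⟨i + 1, hi1⟩ : Fin n) = ⟨i + 1, Nat.lt_of_succ_lt hi2'⟩ from rfl]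
    exact sw_apply_left (i + 1) hi2'
  have htC : sw n (i + 1) ⟨i + 1 + 1, hi2'⟩ = ⟨i + 1, Nat.lt_of_succ_lt hi2'⟩ :=
    sw_apply_right (i + 1) hi2'
  -- left-hand side chain
  have h1 := pb_eq dem hdem i hi1 f
  have h1t := congrArg (rename (sw n (i + 1))) h1
  simp only [map_mul, map_sub, rename_X, htA, htB, htB', htC] at h1t
  have h2 := pb_eq dem hdem (i + 1) hi2' (dem i f - f)
  simp only [map_sub] at h2
  have E2 : (X (⟨i, Nat.lt_of_succ_lt hi1⟩ : Fin n) - X ⟨i + 1, hi1⟩)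
        * (X (⟨i + 1, Nat.lt_of_succ_lt hi2'⟩ : Fin n) - X ⟨i + 1 + 1, hi2'⟩)
        * (X (⟨i, Nat.lt_of_succ_lt hi1⟩ : Fin n) - X ⟨i + 1 + 1, hi2'⟩)
        * (dem (i+1) (dem i f - f) - (dem i f - f))
      = X (⟨i + 1 + 1, hi2'⟩ : Fin n) * X (⟨i + 1, hi1⟩ : Fin n)
          * (X (⟨i, Nat.lt_of_succ_lt hi1⟩ : Fin n) - X ⟨i + 1 + 1, hi2'⟩)
          * (f - rename (sw n i) f)
        - X (⟨i + 1 + 1, hi2'⟩ : Fin n) * X (⟨i + 1 + 1, hi2'⟩ : Fin n)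
          * (X (⟨i, Nat.lt_of_succ_lt hi1⟩ : Fin n) - X ⟨i + 1, hi1⟩)
          * (rename (sw n (i + 1)) f - rename (sw n (i + 1)) (rename (sw n i) f)) := by
    linear_combination ((X (⟨i, Nat.lt_of_succ_lt hi1⟩ : Fin n) - X ⟨i + 1, hi1⟩)
        * (X (⟨i, Nat.lt_of_succ_lt hi1⟩ : Fin n) - X ⟨i + 1 + 1, hi2'⟩)) * h2
      + (X (⟨i + 1 + 1, hi2'⟩ : Fin n)
        * (X (⟨i, Nat.lt_of_succ_lt hi1⟩ : Fin n) - X ⟨i + 1 + 1, hi2'⟩)) * h1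
      - (X (⟨i + 1 + 1, hi2'⟩ : Fin n)
        * (X (⟨i, Nat.lt_of_succ_lt hi1⟩ : Fin n) - X ⟨i + 1, hi1⟩)) * h1t
  have E2r := congrArg (rename (sw n i)) E2
  simp only [map_mul, map_sub, rename_X, hsA, hsB, hsA', hsC, rename_sw_invol] at E2r
  have h3 := pb_eq dem hdem i hi1 (dem (i+1) (dem i f - f) - (dem i f - f))
  simp only [map_sub] at h3
  have BIG1 : (X (⟨i, Nat.lt_of_succ_lt hi1⟩ : Fin n) - X ⟨i + 1, hi1⟩)
        * ((X (⟨i, Nat.lt_of_succ_lt hi1⟩ : Fin n) - X ⟨i + 1, hi1⟩)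
          * (X (⟨i + 1, Nat.lt_of_succ_lt hi2'⟩ : Fin n) - X ⟨i + 1 + 1, hi2'⟩)
          * (X (⟨i, Nat.lt_of_succ_lt hi1⟩ : Fin n) - X ⟨i + 1 + 1, hi2'⟩)
          * (dem i (dem (i+1) (dem i f - f) - (dem i f - f))
            - (dem (i+1) (dem i f - f) - (dem i f - f))))
      = (X (⟨i, Nat.lt_of_succ_lt hi1⟩ : Fin n) - X ⟨i + 1, hi1⟩)
        * (X (⟨i + 1, hi1⟩ : Fin n) * X (⟨i + 1 + 1, hi2'⟩ : Fin n)
          * X (⟨i + 1 + 1, hi2'⟩ : Fin n)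
          * (f - rename (sw n i) f - rename (sw n (i + 1)) f
            + rename (sw n (i + 1)) (rename (sw n i) f)
            + rename (sw n i) (rename (sw n (i + 1)) f)
            - rename (sw n i) (rename (sw n (i + 1)) (rename (sw n i) f)))) := by
    linear_combination ((X (⟨i, Nat.lt_of_succ_lt hi1⟩ : Fin n) - X ⟨i + 1, hi1⟩)
        * (X (⟨i + 1, Nat.lt_of_succ_lt hi2'⟩ : Fin n) - X ⟨i + 1 + 1, hi2'⟩)
        * (X (⟨i, Nat.lt_of_succ_lt hi1⟩ : Fin n) - X ⟨i + 1 + 1, hi2'⟩)) * h3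
      + X (⟨i + 1, hi1⟩ : Fin n) * E2 + X (⟨i + 1, hi1⟩ : Fin n) * E2r
  have CAN1 := mul_left_cancel₀ hu BIG1
  -- right-hand side chain
  have k1 := pb_eq dem hdem (i + 1) hi2' f
  have k1r := congrArg (rename (sw n i)) k1
  simp only [map_mul, map_sub, rename_X, hsA, hsB, hsA', hsC] at k1r
  have k2 := pb_eq dem hdem i hi1 (dem (i+1) f - f)
  simp only [map_sub] at k2
  have F2 : (X (⟨i, Nat.lt_of_succ_lt hi1⟩ : Fin n) - X ⟨i + 1, hi1⟩)
        * (X (⟨i + 1, Nat.lt_of_succ_lt hi2'⟩ : Fin n) - X ⟨i + 1 + 1, hi2'⟩)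
        * (X (⟨i, Nat.lt_of_succ_lt hi1⟩ : Fin n) - X ⟨i + 1 + 1, hi2'⟩)
        * (dem i (dem (i+1) f - f) - (dem (i+1) f - f))
      = X (⟨i + 1, hi1⟩ : Fin n) * X (⟨i + 1 + 1, hi2'⟩ : Fin n)
          * (X (⟨i, Nat.lt_of_succ_lt hi1⟩ : Fin n) - X ⟨i + 1 + 1, hi2'⟩)
          * (f - rename (sw n (i + 1)) f)
        - X (⟨i + 1, hi1⟩ : Fin n) * X (⟨i + 1 + 1, hi2'⟩ : Fin n)
          * (X (⟨i + 1, Nat.lt_of_succ_lt hi2'⟩ : Fin n) - X ⟨i + 1 + 1, hi2'⟩)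
          * (rename (sw n i) f - rename (sw n i) (rename (sw n (i + 1)) f)) := by
    linear_combination ((X (⟨i + 1, Nat.lt_of_succ_lt hi2'⟩ : Fin n) - X ⟨i + 1 + 1, hi2'⟩)
        * (X (⟨i, Nat.lt_of_succ_lt hi1⟩ : Fin n) - X ⟨i + 1 + 1, hi2'⟩)) * k2
      + (X (⟨i + 1, hi1⟩ : Fin n)
        * (X (⟨i, Nat.lt_of_succ_lt hi1⟩ : Fin n) - X ⟨i + 1 + 1, hi2'⟩)) * k1
      - (X (⟨i + 1, hi1⟩ : Fin n)
        * (X (⟨i + 1, Nat.lt_of_succ_lt hi2'⟩ : Fin n) - X ⟨i + 1 + 1, hi2'⟩)) * k1r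
  have F2t := congrArg (rename (sw n (i + 1))) F2
  simp only [map_mul, map_sub, rename_X, htA, htB, htB', htC, rename_sw_invol] at F2t
  have k3 := pb_eq dem hdem (i + 1) hi2' (dem i (dem (i+1) f - f) - (dem (i+1) f - f))
  simp only [map_sub] at k3
  have BIG2 : (X (⟨i + 1, Nat.lt_of_succ_lt hi2'⟩ : Fin n) - X ⟨i + 1 + 1, hi2'⟩)
        * ((X (⟨i, Nat.lt_of_succ_lt hi1⟩ : Fin n) - X ⟨i + 1, hi1⟩)
          * (X (⟨i + 1, Nat.lt_of_succ_lt hi2'⟩ : Fin n) - X ⟨i + 1 + 1, hi2'⟩)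
          * (X (⟨i, Nat.lt_of_succ_lt hi1⟩ : Fin n) - X ⟨i + 1 + 1, hi2'⟩)
          * (dem (i+1) (dem i (dem (i+1) f - f) - (dem (i+1) f - f))
            - (dem i (dem (i+1) f - f) - (dem (i+1) f - f))))
      = (X (⟨i + 1, Nat.lt_of_succ_lt hi2'⟩ : Fin n) - X ⟨i + 1 + 1, hi2'⟩)
        * (X (⟨i + 1, hi1⟩ : Fin n) * X (⟨i + 1 + 1, hi2'⟩ : Fin n)
          * X (⟨i + 1 + 1, hi2'⟩ : Fin n)
          * (f - rename (sw n (i + 1)) f - rename (sw n i) f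
            + rename (sw n i) (rename (sw n (i + 1)) f)
            + rename (sw n (i + 1)) (rename (sw n i) f)
            - rename (sw n (i + 1)) (rename (sw n i) (rename (sw n (i + 1)) f)))) := by
    linear_combination ((X (⟨i, Nat.lt_of_succ_lt hi1⟩ : Fin n) - X ⟨i + 1, hi1⟩)
        * (X (⟨i + 1, Nat.lt_of_succ_lt hi2'⟩ : Fin n) - X ⟨i + 1 + 1, hi2'⟩)
        * (X (⟨i, Nat.lt_of_succ_lt hi1⟩ : Fin n) - X ⟨i + 1 + 1, hi2'⟩)) * k3
      + X (⟨i + 1 + 1, hi2'⟩ : Fin n) * F2 + X (⟨i + 1 + 1, hi2'⟩ : Fin n) * F2t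
  have CAN2 := mul_left_cancel₀ hv BIG2
  have hbr := rename_sw_braid (n := n) i (by omega) f
  refine mul_left_cancel₀ (mul_ne_zero (mul_ne_zero hu hv) hw) ?_
  linear_combination CAN1 - CAN2
    - X (⟨i + 1, hi1⟩ : Fin n) * X (⟨i + 1 + 1, hi2'⟩ : Fin n)
      * X (⟨i + 1 + 1, hi2'⟩ : Fin n) * hbr

end Alg3

section Words
variable {n : ℕ}

lemma inv_mul_sw_apply (i : ℕ) (w : Equiv.Perm (Fin n)) (c : Fin n) :
    (sw n i * w)⁻¹ c = w⁻¹ (sw n i c) := by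
  rw [mul_inv_rev, sw_inv, Equiv.Perm.mul_apply]

lemma invNum_one : invNum (1 : Equiv.Perm (Fin n)) = 0 := by
  unfold invNum
  rw [Finset.card_eq_zero, Finset.filter_eq_empty_iff]
  rintro ⟨p, q⟩ _ ⟨h1, h2⟩
  simp only [Equiv.Perm.one_apply] at h2
  exact absurd (h1.trans h2) (lt_irrefl _)

lemma invNum_prodW_le (l : List ℕ) (hval : ∀ i ∈ l, i + 1 < n) :
    invNum ((l.map (sw n)).prod) ≤ l.length := by
  induction l with
  | nil => simp [invNum_one]
  | cons i m ih =>
    have hi : i + 1 < n := hval i (by simp)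
    have htail := ih (fun j hj => hval j (by simp [hj]))
    rw [List.map_cons, List.prod_cons]
    set w' := (m.map (sw n)).prod with hw'
    rcases lt_trichotomy (w'⁻¹ ⟨i, Nat.lt_of_succ_lt hi⟩) (w'⁻¹ ⟨i + 1, hi⟩) with h | h | h
    · rw [invNum_succ_left i hi w' h]
      simpa using Nat.add_le_add_right htail 1
    · exact absurd (w'⁻¹.injective h) (by simp [Fin.ext_iff])
    · have := invNum_pred_left i hi w' h
      simp only [List.length_cons]
      omega

lemma exists_reduced : ∀ (k : ℕ) (w : Equiv.Perm (Fin n)), invNum w = k →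
    ∃ l : List ℕ, (∀ i ∈ l, i + 1 < n) ∧ (l.map (sw n)).prod = w ∧ l.length = k := by
  intro k
  induction k using Nat.strong_induction_on with
  | _ k IH =>
    intro w hw
    by_cases h1 : w = 1
    · subst h1
      exact ⟨[], by simp, by simp, by simp only [List.length_nil]; rw [← hw, invNum_one]⟩
    · have h2 : w⁻¹ ≠ 1 := fun hc => h1 (by simpa using congrArg (·⁻¹) hc)
      obtain ⟨i, hi, hdesc⟩ := exists_descent w⁻¹ h2
      have hd : w⁻¹ ⟨i + 1, hi⟩ < w⁻¹ ⟨i, Nat.lt_of_succ_lt hi⟩ := hdesc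
      have hstep := invNum_pred_left i hi w hd
      have hk : k = invNum (sw n i * w) + 1 := by omega
      obtain ⟨l', hval', hprod', hlen'⟩ := IH (invNum (sw n i * w)) (by omega) (sw n i * w) rfl
      refine ⟨i :: l', ?_, ?_, ?_⟩
      · intro j hj
        rcases List.mem_cons.mp hj with h | h
        · subst h; exact hi
        · exact hval' j h
      · rw [List.map_cons, List.prod_cons, hprod', ← mul_assoc, sw_mul_self, one_mul]
      · simp [hlen', hk]

end Words

section WD
variable {n : ℕ} (dem : ℕ → MvPolynomial (Fin n) ℤ → MvPolynomial (Fin n) ℤ)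
  (hdem : ∀ (i : ℕ) (hi : i + 1 < n) (f : MvPolynomial (Fin n) ℤ),
      (X (⟨i, Nat.lt_of_succ_lt hi⟩ : Fin n) - X ⟨i + 1, hi⟩) * dem i f
        = X (⟨i, Nat.lt_of_succ_lt hi⟩ : Fin n) * f - X ⟨i + 1, hi⟩ * rename (sw n i) f)

lemma sw_mul_cancel (i : ℕ) (x : Equiv.Perm (Fin n)) : sw n i * (sw n i * x) = x := by
  rw [← mul_assoc, sw_mul_self, one_mul]

set_option maxHeartbeats 2000000 in
include hdem in
lemma word_indep : ∀ (k : ℕ) (w : Equiv.Perm (Fin n)) (l l' : List ℕ),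
    (∀ i ∈ l, i + 1 < n) → (∀ i ∈ l', i + 1 < n) →
    (l.map (sw n)).prod = w → (l'.map (sw n)).prod = w →
    l.length = k → l'.length = k → invNum w = k →
    ∀ f : MvPolynomial (Fin n) ℤ,
      l.foldr (fun i g => dem i g - g) f = l'.foldr (fun i g => dem i g - g) f := by
  intro k
  induction k using Nat.strong_induction_on with
  | _ k IH =>
  intro w l l' hvl hvl' hpl hpl' hll hll' hinv f
  cases l with
  | nil =>
    cases l' with
    | nil => rfl
    | cons i' m' => simp at hll hll'; omega
  | cons i m =>
    cases l' with
    | nil => simp at hll hll'; omega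
    | cons i' m' =>
      have hi : i + 1 < n := hvl i (by simp)
      have hi' : i' + 1 < n := hvl' i' (by simp)
      have hvm : ∀ j ∈ m, j + 1 < n := fun j hj => hvl j (by simp [hj])
      have hvm' : ∀ j ∈ m', j + 1 < n := fun j hj => hvl' j (by simp [hj])
      rw [List.map_cons, List.prod_cons] at hpl hpl'
      have hm : (m.map (sw n)).prod = sw n i * w := by
        rw [← hpl, sw_mul_cancel]
      have hm' : (m'.map (sw n)).prod = sw n i' * w := by
        rw [← hpl', sw_mul_cancel]
      have hlm : m.length + 1 = k := by simpa using hll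
      have hlm' : m'.length + 1 = k := by simpa using hll'
      have hle : invNum (sw n i * w) ≤ m.length := by
        rw [← hm]; exact invNum_prodW_le m hvm
      have hle' : invNum (sw n i' * w) ≤ m'.length := by
        rw [← hm']; exact invNum_prodW_le m' hvm'
      have hdi : w⁻¹ ⟨i + 1, hi⟩ < w⁻¹ ⟨i, Nat.lt_of_succ_lt hi⟩ := by
        rcases lt_trichotomy (w⁻¹ ⟨i, Nat.lt_of_succ_lt hi⟩) (w⁻¹ ⟨i + 1, hi⟩) with h | h | h
        · exfalso; have := invNum_succ_left i hi w h; omega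
        · exact absurd (w⁻¹.injective h) (by simp [Fin.ext_iff])
        · exact h
      have hdi' : w⁻¹ ⟨i' + 1, hi'⟩ < w⁻¹ ⟨i', Nat.lt_of_succ_lt hi'⟩ := by
        rcases lt_trichotomy (w⁻¹ ⟨i', Nat.lt_of_succ_lt hi'⟩) (w⁻¹ ⟨i' + 1, hi'⟩) with h | h | h
        · exfalso; have := invNum_succ_left i' hi' w h; omega
        · exact absurd (w⁻¹.injective h) (by simp [Fin.ext_iff])
        · exact h
      have hki : invNum (sw n i * w) + 1 = k := by
        have := invNum_pred_left i hi w hdi; omega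
      have hki' : invNum (sw n i' * w) + 1 = k := by
        have := invNum_pred_left i' hi' w hdi'; omega
      by_cases hii : i = i'
      · subst hii
        simp only [List.foldr_cons]
        rw [IH (k-1) (by omega) (sw n i * w) m m' hvm hvm' hm hm'
          (by omega) (by omega) (by omega) f]
      · have comm_case : ∀ (hcc : i + 1 < i' ∨ i' + 1 < i),
            List.foldr (fun j g => dem j g - g) f (i :: m)
              = List.foldr (fun j g => dem j g - g) f (i' :: m') := by
          intro hcc
          have hswc1 : sw n i ⟨i', Nat.lt_of_succ_lt hi'⟩ = ⟨i', Nat.lt_of_succ_lt hi'⟩ :=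
            sw_apply_mk_other i i' (by omega) (by omega) (by omega)
          have hswc2 : sw n i ⟨i' + 1, hi'⟩ = ⟨i' + 1, hi'⟩ :=
            sw_apply_mk_other i (i' + 1) (by omega) (by omega) (by omega)
          have hdW1 : (sw n i * w)⁻¹ ⟨i' + 1, hi'⟩
              < (sw n i * w)⁻¹ ⟨i', Nat.lt_of_succ_lt hi'⟩ := by
            rw [inv_mul_sw_apply, inv_mul_sw_apply, hswc1, hswc2]; exact hdi'
          have hk2 : invNum (sw n i' * (sw n i * w)) + 1 + 1 = k := by
            have := invNum_pred_left i' hi' (sw n i * w) hdW1; omega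
          obtain ⟨r, hvr, hpr, hlr⟩ := exists_reduced
            (invNum (sw n i' * (sw n i * w))) (sw n i' * (sw n i * w)) rfl
          have hvir : ∀ j ∈ i' :: r, j + 1 < n := by
            intro j hj
            rcases List.mem_cons.mp hj with h | h
            · subst h; exact hi'
            · exact hvr j h
          have hvir2 : ∀ j ∈ i :: r, j + 1 < n := by
            intro j hj
            rcases List.mem_cons.mp hj with h | h
            · subst h; exact hi
            · exact hvr j h
          have hp1 : ((i' :: r).map (sw n)).prod = sw n i * w := by
            rw [List.map_cons, List.prod_cons, hpr, sw_mul_cancel]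
          have hp2 : ((i :: r).map (sw n)).prod = sw n i' * w := by
            rw [List.map_cons, List.prod_cons, hpr]
            have hcm := sw_commute (n := n) hcc
            calc sw n i * (sw n i' * (sw n i * w))
                = (sw n i * sw n i') * (sw n i * w) := by rw [mul_assoc]
              _ = (sw n i' * sw n i) * (sw n i * w) := by rw [hcm]
              _ = sw n i' * w := by rw [mul_assoc, sw_mul_cancel]
          have IH1 := IH (k-1) (by omega) (sw n i * w) m (i' :: r) hvm hvir hm hp1
            (by omega) (by simp only [List.length_cons]; omega) (by omega)
          have IH2 := IH (k-1) (by omega) (sw n i' * w) m' (i :: r) hvm' hvir2 hm' hp2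
            (by omega) (by simp only [List.length_cons]; omega) (by omega)
          simp only [List.foldr_cons]
          rw [IH1 f, IH2 f]
          simp only [List.foldr_cons]
          exact pb_comm dem hdem i i' hi hi' hcc (List.foldr (fun j g => dem j g - g) f r)
        rcases (by omega : i + 1 < i' ∨ i' + 1 < i ∨ i' = i + 1 ∨ i = i' + 1)
          with hc | hc | hc | hc
        · exact comm_case (Or.inl hc)
        · exact comm_case (Or.inr hc)
        · -- braid case i' = i + 1
          subst hc
          have e1 : sw n i ⟨i + 1 + 1, hi'⟩ = ⟨i + 1 + 1, hi'⟩ :=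
            sw_apply_mk_other i (i + 1 + 1) (by omega) (by omega) (by omega)
          have e2 : sw n i ⟨i + 1, Nat.lt_of_succ_lt hi'⟩ = ⟨i, Nat.lt_of_succ_lt hi⟩ :=
            sw_apply_right i hi
          have e3 : sw n (i + 1) ⟨i, Nat.lt_of_succ_lt hi⟩ = ⟨i, Nat.lt_of_succ_lt hi⟩ :=
            sw_apply_mk_other (i + 1) i (by omega) (by omega) (by omega)
          have e4 : sw n i ⟨i, Nat.lt_of_succ_lt hi⟩ = ⟨i + 1, hi⟩ := sw_apply_left i hi
          have e5 : sw n (i + 1) ⟨i + 1, Nat.lt_of_succ_lt hi'⟩ = ⟨i + 1 + 1, hi'⟩ :=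
            sw_apply_left (i + 1) hi'
          have hdW1 : (sw n i * w)⁻¹ ⟨i + 1 + 1, hi'⟩
              < (sw n i * w)⁻¹ ⟨i + 1, Nat.lt_of_succ_lt hi'⟩ := by
            rw [inv_mul_sw_apply, inv_mul_sw_apply, e1, e2]
            exact hdi'.trans hdi
          have hk2 : invNum (sw n (i + 1) * (sw n i * w)) + 1 + 1 = k := by
            have := invNum_pred_left (i + 1) hi' (sw n i * w) hdW1; omega
          have hdW2 : (sw n (i + 1) * (sw n i * w))⁻¹ ⟨i + 1, hi⟩
              < (sw n (i + 1) * (sw n i * w))⁻¹ ⟨i, Nat.lt_of_succ_lt hi⟩ := by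
            simp only [inv_mul_sw_apply]
            rw [show sw n (i + 1) ⟨i + 1, hi⟩ = ⟨i + 1 + 1, hi'⟩ from e5, e1,
              e3, e4]
            exact hdi'
          have hk3 : invNum (sw n i * (sw n (i + 1) * (sw n i * w))) + 1 + 1 + 1 = k := by
            have := invNum_pred_left i hi (sw n (i + 1) * (sw n i * w)) hdW2; omega
          obtain ⟨r, hvr, hpr, hlr⟩ := exists_reduced
            (invNum (sw n i * (sw n (i + 1) * (sw n i * w))))
            (sw n i * (sw n (i + 1) * (sw n i * w))) rfl
          have hv1 : ∀ j ∈ (i+1) :: i :: r, j + 1 < n := by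
            intro j hj
            rcases List.mem_cons.mp hj with h | h
            · subst h; exact hi'
            rcases List.mem_cons.mp h with h' | h'
            · subst h'; exact hi
            · exact hvr j h'
          have hv2 : ∀ j ∈ i :: (i+1) :: r, j + 1 < n := by
            intro j hj
            rcases List.mem_cons.mp hj with h | h
            · subst h; exact hi
            rcases List.mem_cons.mp h with h' | h'
            · subst h'; exact hi'
            · exact hvr j h'
          have hp1 : (((i+1) :: i :: r).map (sw n)).prod = sw n i * w := by
            rw [List.map_cons, List.prod_cons, List.map_cons, List.prod_cons, hpr,
              sw_mul_cancel, sw_mul_cancel]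
          have hp2 : ((i :: (i+1) :: r).map (sw n)).prod = sw n (i + 1) * w := by
            rw [List.map_cons, List.prod_cons, List.map_cons, List.prod_cons, hpr]
            have hb := sw_braid (n := n) i (by omega)
            calc sw n i * (sw n (i+1) * (sw n i * (sw n (i+1) * (sw n i * w))))
                = (sw n i * sw n (i+1) * sw n i) * (sw n (i+1) * (sw n i * w)) := by
                  simp only [mul_assoc]
              _ = (sw n (i+1) * sw n i * sw n (i+1)) * (sw n (i+1) * (sw n i * w)) := by
                  rw [hb]
              _ = sw n (i+1) * w := by simp only [mul_assoc, sw_mul_cancel]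
          have IH1 := IH (k-1) (by omega) (sw n i * w) m ((i+1) :: i :: r) hvm hv1 hm hp1
            (by omega) (by simp only [List.length_cons]; omega) (by omega)
          have IH2 := IH (k-1) (by omega) (sw n (i+1) * w) m' (i :: (i+1) :: r) hvm' hv2
            hm' hp2 (by omega) (by simp only [List.length_cons]; omega) (by omega)
          simp only [List.foldr_cons]
          rw [IH1 f, IH2 f]
          simp only [List.foldr_cons]
          exact pb_braid dem hdem i hi' (List.foldr (fun j g => dem j g - g) f r)
        · -- braid case i = i' + 1
          subst hc
          have e1 : sw n (i' + 1) ⟨i', Nat.lt_of_succ_lt hi'⟩ = ⟨i', Nat.lt_of_succ_lt hi'⟩ :=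
            sw_apply_mk_other (i' + 1) i' (by omega) (by omega) (by omega)
          have e2 : sw n (i' + 1) ⟨i' + 1, hi'⟩ = ⟨i' + 1 + 1, hi⟩ := sw_apply_left (i' + 1) hi
          have e3 : sw n i' ⟨i' + 1 + 1, hi⟩ = ⟨i' + 1 + 1, hi⟩ :=
            sw_apply_mk_other i' (i' + 1 + 1) (by omega) (by omega) (by omega)
          have e4 : sw n (i' + 1) ⟨i' + 1 + 1, hi⟩ = ⟨i' + 1, Nat.lt_of_succ_lt hi⟩ :=
            sw_apply_right (i' + 1) hi
          have e5 : sw n i' ⟨i' + 1, Nat.lt_of_succ_lt hi⟩ = ⟨i', Nat.lt_of_succ_lt hi'⟩ :=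
            sw_apply_right i' hi'
          have hdW1 : (sw n (i' + 1) * w)⁻¹ ⟨i' + 1, hi'⟩
              < (sw n (i' + 1) * w)⁻¹ ⟨i', Nat.lt_of_succ_lt hi'⟩ := by
            rw [inv_mul_sw_apply, inv_mul_sw_apply, e1,
              show sw n (i' + 1) ⟨i' + 1, hi'⟩ = ⟨i' + 1 + 1, hi⟩ from e2]
            exact hdi.trans hdi'
          have hk2 : invNum (sw n i' * (sw n (i' + 1) * w)) + 1 + 1 = k := by
            have := invNum_pred_left i' hi' (sw n (i' + 1) * w) hdW1; omega
          have hdW2 : (sw n i' * (sw n (i' + 1) * w))⁻¹ ⟨i' + 1 + 1, hi⟩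
              < (sw n i' * (sw n (i' + 1) * w))⁻¹ ⟨i' + 1, Nat.lt_of_succ_lt hi⟩ := by
            simp only [inv_mul_sw_apply]
            rw [e3, e4, e5, e1]
            exact hdi'
          have hk3 : invNum (sw n (i' + 1) * (sw n i' * (sw n (i' + 1) * w))) + 1 + 1 + 1 = k := by
            have := invNum_pred_left (i' + 1) hi (sw n i' * (sw n (i' + 1) * w)) hdW2; omega
          obtain ⟨r, hvr, hpr, hlr⟩ := exists_reduced
            (invNum (sw n (i' + 1) * (sw n i' * (sw n (i' + 1) * w))))
            (sw n (i' + 1) * (sw n i' * (sw n (i' + 1) * w))) rfl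
          have hv1 : ∀ j ∈ i' :: (i' + 1) :: r, j + 1 < n := by
            intro j hj
            rcases List.mem_cons.mp hj with h | h
            · subst h; exact hi'
            rcases List.mem_cons.mp h with h' | h'
            · subst h'; exact hi
            · exact hvr j h'
          have hv2 : ∀ j ∈ (i' + 1) :: i' :: r, j + 1 < n := by
            intro j hj
            rcases List.mem_cons.mp hj with h | h
            · subst h; exact hi
            rcases List.mem_cons.mp h with h' | h'
            · subst h'; exact hi'
            · exact hvr j h'
          have hp1 : ((i' :: (i' + 1) :: r).map (sw n)).prod = sw n (i' + 1) * w := by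
            rw [List.map_cons, List.prod_cons, List.map_cons, List.prod_cons, hpr,
              sw_mul_cancel, sw_mul_cancel]
          have hp2 : (((i' + 1) :: i' :: r).map (sw n)).prod = sw n i' * w := by
            rw [List.map_cons, List.prod_cons, List.map_cons, List.prod_cons, hpr]
            have hb := sw_braid (n := n) i' (by omega)
            calc sw n (i'+1) * (sw n i' * (sw n (i'+1) * (sw n i' * (sw n (i'+1) * w))))
                = (sw n (i'+1) * sw n i' * sw n (i'+1)) * (sw n i' * (sw n (i'+1) * w)) := by
                  simp only [mul_assoc]
              _ = (sw n i' * sw n (i'+1) * sw n i') * (sw n i' * (sw n (i'+1) * w)) := by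
                  rw [← hb]
              _ = sw n i' * w := by simp only [mul_assoc, sw_mul_cancel]
          have IH1 := IH (k-1) (by omega) (sw n (i' + 1) * w) m (i' :: (i' + 1) :: r)
            hvm hv1 hm hp1 (by omega) (by simp only [List.length_cons]; omega) (by omega)
          have IH2 := IH (k-1) (by omega) (sw n i' * w) m' ((i' + 1) :: i' :: r) hvm' hv2
            hm' hp2 (by omega) (by simp only [List.length_cons]; omega) (by omega)
          simp only [List.foldr_cons]
          rw [IH1 f, IH2 f]
          simp only [List.foldr_cons]
          exact (pb_braid dem hdem i' hi (List.foldr (fun j g => dem j g - g) f r)).symm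

end WD

section E
variable {n : ℕ} (dem : ℕ → MvPolynomial (Fin n) ℤ → MvPolynomial (Fin n) ℤ)
  (hdem : ∀ (i : ℕ) (hi : i + 1 < n) (f : MvPolynomial (Fin n) ℤ),
      (X (⟨i, Nat.lt_of_succ_lt hi⟩ : Fin n) - X ⟨i + 1, hi⟩) * dem i f
        = X (⟨i, Nat.lt_of_succ_lt hi⟩ : Fin n) * f - X ⟨i + 1, hi⟩ * rename (sw n i) f)

include hdem in
lemma foldr_pb_zero (m : List ℕ) (hvm : ∀ i ∈ m, i + 1 < n) :
    m.foldr (fun i f => dem i f - f) (0 : MvPolynomial (Fin n) ℤ) = 0 := by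
  induction m with
  | nil => rfl
  | cons i r ih =>
    simp only [List.foldr_cons]
    rw [ih (fun j hj => hvm j (by simp [hj])), dem_zero dem hdem i (hvm i (by simp)),
      sub_zero]

lemma filter_le_eq (I : Finset ℕ) (j : ℕ) (hj : j ∉ I) :
    (I.filter fun i => j ≤ i) = I.filter fun i => j + 1 ≤ i := by
  ext i
  simp only [Finset.mem_filter]
  constructor
  · rintro ⟨hiI, hle⟩
    have : i ≠ j := fun h => hj (h ▸ hiI)
    exact ⟨hiI, by omega⟩
  · rintro ⟨hiI, hle⟩
    exact ⟨hiI, by omega⟩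

lemma expI_sw (I : Finset ℕ) (j : ℕ) (hj : j ∉ I) (hjn : j + 1 < n) (c : Fin n) :
    expI n I c = expI n I (sw n j c) := by
  unfold expI
  rw [coe_sw j hjn c]
  split_ifs with h1 h2
  · rw [h1, filter_le_eq I j hj]
  · rw [h2, ← filter_le_eq I j hj]
  · rfl

lemma rename_sw_xI (I : Finset ℕ) (j : ℕ) (hj : j ∉ I) (hjn : j + 1 < n) :
    rename (sw n j) (xI ℤ n I) = xI ℤ n I := by
  unfold xI
  rw [map_prod]
  simp only [map_pow, rename_X]
  exact Fintype.prod_equiv (sw n j) _ _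
    (fun c => by rw [expI_sw I j hj hjn c])

end E

/-- **Vanishing claim in the proof of Theorem 4.4.**  If `α ⊨ n`, `w ∈ 𝔖_n`, and some
`j ∈ D(w)` satisfies `j ∉ D(α)`, then `π̄_w(x_{D(α)}) = 0` (with `π̄_w` computed from any
reduced word of `w`, and `π_i` characterized by
`(x_i - x_{i+1}) π_i f = x_i f - x_{i+1} s_i(f)`, `π̄_i = π_i - 1`). -/
theorem stmt_6 (n : ℕ) (hn : 1 ≤ n) (α : Composition n) (w : Equiv.Perm (Fin n))
    (dem : ℕ → MvPolynomial (Fin n) ℤ → MvPolynomial (Fin n) ℤ)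
    (hdem : ∀ (i : ℕ) (hi : i + 1 < n) (f : MvPolynomial (Fin n) ℤ),
      (X (⟨i, Nat.lt_of_succ_lt hi⟩ : Fin n) - X ⟨i + 1, hi⟩) * dem i f
        = X (⟨i, Nat.lt_of_succ_lt hi⟩ : Fin n) * f - X ⟨i + 1, hi⟩ * rename (sw n i) f)
    (l : List ℕ) (hval : ∀ i ∈ l, i + 1 < n)
    (hprod : (l.map (sw n)).prod = w) (hred : l.length = invNum w)
    (hj : ∃ j ∈ permDes w, j ∉ compDes α) :
    l.foldr (fun i f => dem i f - f) (xI ℤ n (compDes α)) = 0 := by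
  obtain ⟨j, hjD, hjI⟩ := hj
  have hjD' : j < n - 1 ∧ pval w (j + 1) < pval w j := by
    simpa [permDes] using hjD
  have hjn : j + 1 < n := by omega
  have hd : w ⟨j + 1, hjn⟩ < w ⟨j, Nat.lt_of_succ_lt hjn⟩ := by
    have := hjD'.2
    rw [pval, pval] at this
    rw [dif_pos hjn, dif_pos (Nat.lt_of_succ_lt hjn)] at this
    exact this
  have hstep := invNum_pred_right j hjn w hd
  obtain ⟨m, hvm, hpm, hlm⟩ := exists_reduced (invNum (w * sw n j)) (w * sw n j) rfl
  have hxinv : rename (sw n j) (xI ℤ n (compDes α)) = xI ℤ n (compDes α) :=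
    rename_sw_xI _ j hjI hjn
  have hv2 : ∀ i ∈ m ++ [j], i + 1 < n := by
    intro i hi
    rcases List.mem_append.mp hi with h | h
    · exact hvm i h
    · rw [List.mem_singleton.mp h]; exact hjn
  have hp2 : ((m ++ [j]).map (sw n)).prod = w := by
    rw [List.map_append, List.prod_append, hpm]
    simp only [List.map_cons, List.map_nil, List.prod_cons, List.prod_nil, mul_one]
    rw [mul_assoc, sw_mul_self, mul_one]
  have hl2 : (m ++ [j]).length = invNum w := by
    simp only [List.length_append, List.length_cons, List.length_nil, hlm]
    omega
  rw [word_indep dem hdem (invNum w) w l (m ++ [j]) hval hv2 hprod hp2 hred hl2 rfl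
    (xI ℤ n (compDes α))]
  rw [List.foldr_append]
  have hin : List.foldr (fun i f => dem i f - f) (xI ℤ n (compDes α)) [j]
      = 0 := by
    simp only [List.foldr_cons, List.foldr_nil]
    exact pb_invariant dem hdem j hjn _ hxinv
  rw [hin]
  exact foldr_pb_zero dem hdem m hvm
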